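/- Let Δ and Θ be distributions over S and T respectively, and R ⊆ S × T. Then Δ R† Θ if and only if there exists a weight function w : S × T → [0,1] such that (a) for all s ∈ S, Σ_{t∈T} w(s,t) = Δ(s); (b) for all t ∈ T, Σ_{s∈S} w(s,t) = Θ(t); and (c) for all (s,t) ∈ S × T, w(s,t) > 0 implies s R t. -/

import Mathlib

open scoped Classical

/-- A (discrete) probability distribution over a finite set `S`. -/
structure FDist (S : Type*) [Fintype S] where
  f : S → ℝ
  nonneg : ∀ s, 0 ≤ f s
  sum_one : ∑ s, f s = 1

/-- The point distribution at `s`. -/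
noncomputable def FDist.point {S : Type*} [Fintype S] (s : S) : FDist S where
  f := fun u => if u = s then 1 else 0
  nonneg := by intro u; split <;> norm_num
  sum_one := by simp

/-- The lifting `R†` of a relation to distributions: the smallest relation
relating point distributions of related states and closed under convex
combinations. -/
inductive Lift {S T : Type*} [Fintype S] [Fintype T] (R : S → T → Prop) :
    FDist S → FDist T → Prop
  | point {s : S} {t : T} :
      R s t → Lift R (FDist.point s) (FDist.point t)
  | convex (I : Finset ℕ) (p : ℕ → ℝ)
      (hp : ∀ i ∈ I, 0 ≤ p i) (hsum : ∑ i ∈ I, p i = 1)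
      (Δs : ℕ → FDist S) (Θs : ℕ → FDist T)
      (h : ∀ i ∈ I, Lift R (Δs i) (Θs i))
      (Δ : FDist S) (Θ : FDist T)
      (hΔ : Δ.f = ∑ i ∈ I, p i • (Δs i).f)
      (hΘ : Θ.f = ∑ i ∈ I, p i • (Θs i).f) :
      Lift R Δ Θ

/-- `Δ R† Θ` iff there is a weight function `w : S × T → [0,1]` whose row sums
are `Δ`, whose column sums are `Θ`, and which is positive only on `R`-related
pairs. -/
theorem lift_iff_weight_function {S T : Type*} [Fintype S] [Fintype T]
    (R : S → T → Prop) (Δ : FDist S) (Θ : FDist T) :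
    Lift R Δ Θ ↔
      ∃ w : S → T → ℝ,
        (∀ s t, 0 ≤ w s t ∧ w s t ≤ 1) ∧
        (∀ s, ∑ t, w s t = Δ.f s) ∧
        (∀ t, ∑ s, w s t = Θ.f t) ∧
        (∀ s t, 0 < w s t → R s t) := by
  constructor
  · intro h
    induction h with
    | @point s t hst =>
      refine ⟨fun u v => if u = s ∧ v = t then 1 else 0, ?_, ?_, ?_, ?_⟩
      · intro u v; constructor <;> (dsimp only; split <;> norm_num)
      · intro u
        by_cases hu : u = s
        · subst hu; simp [FDist.point]
        · simp [FDist.point, hu]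
      · intro v
        by_cases hv : v = t
        · subst hv; simp [FDist.point]
        · simp [FDist.point, hv]
      · intro u v huv
        dsimp only at huv
        split at huv
        · rcases ‹u = s ∧ v = t› with ⟨rfl, rfl⟩; exact hst
        · norm_num at huv
    | convex I p hp hsum Δs Θs h Δ Θ hΔ hΘ ih =>
      choose wf hw01 hwrow hwcol hwR using ih
      set W : ℕ → S → T → ℝ := fun i =>
        if hi : i ∈ I then wf i hi else fun _ _ => 0 with hWdef
      have hWmem : ∀ i (hi : i ∈ I), W i = wf i hi := by
        intro i hi; simp [hWdef, hi]
      refine ⟨fun s t => ∑ i ∈ I, p i * W i s t, ?_, ?_, ?_, ?_⟩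
      · intro s t
        constructor
        · exact Finset.sum_nonneg fun i hi =>
            mul_nonneg (hp i hi) (by rw [hWmem i hi]; exact (hw01 i hi s t).1)
        · calc ∑ i ∈ I, p i * W i s t ≤ ∑ i ∈ I, p i * 1 := by
                refine Finset.sum_le_sum fun i hi => ?_
                exact mul_le_mul_of_nonneg_left
                  (by rw [hWmem i hi]; exact (hw01 i hi s t).2) (hp i hi)
          _ = 1 := by simpa using hsum
      · intro s
        rw [Finset.sum_comm]
        have : ∀ i ∈ I, ∑ t, p i * W i s t = p i * (Δs i).f s := by
          intro i hi
          rw [← Finset.mul_sum, hWmem i hi, hwrow i hi s]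
        rw [Finset.sum_congr rfl this, hΔ]
        simp [Finset.sum_apply]
      · intro t
        rw [Finset.sum_comm]
        have : ∀ i ∈ I, ∑ s, p i * W i s t = p i * (Θs i).f t := by
          intro i hi
          rw [← Finset.mul_sum, hWmem i hi, hwcol i hi t]
        rw [Finset.sum_congr rfl this, hΘ]
        simp [Finset.sum_apply]
      · intro s t hpos
        by_contra hnR
        have : ∀ i ∈ I, p i * W i s t ≤ 0 := by
          intro i hi
          rcases eq_or_lt_of_le ((hw01 i hi s t).1) with heq | hlt
          · rw [hWmem i hi, ← heq, mul_zero]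
          · exact absurd (hwR i hi s t hlt) hnR
        exact absurd hpos (not_lt.mpr (Finset.sum_nonpos this))
  · rintro ⟨w, hw01, hrow, hcol, hR⟩
    have hS : Nonempty S := by
      by_contra hne
      haveI : IsEmpty S := not_nonempty_iff.mp hne
      simpa using Δ.sum_one
    have hT : Nonempty T := by
      by_contra hne
      haveI : IsEmpty T := not_nonempty_iff.mp hne
      simpa using Θ.sum_one
    obtain ⟨s0⟩ := hS; obtain ⟨t0⟩ := hT
    set n := Fintype.card (S × T) with hn
    set e : S × T ≃ Fin n := Fintype.equivFin (S × T) with he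
    set pair : ℕ → S × T := fun i =>
      if h : i < n then e.symm ⟨i, h⟩ else (s0, t0) with hpair
    set p : ℕ → ℝ := fun i => w (pair i).1 (pair i).2 with hpdef
    set I : Finset ℕ := (Finset.range n).filter fun i => 0 < p i with hI
    have key : ∀ F : S × T → ℝ, (∀ x, w x.1 x.2 = 0 → F x = 0) →
        ∑ i ∈ I, F (pair i) = ∑ x, F x := by
      intro F hF
      have h1 : ∑ i ∈ I, F (pair i) = ∑ i ∈ Finset.range n, F (pair i) := by
        refine Finset.sum_subset (Finset.filter_subset _ _) ?_
        intro i hi hni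
        have hz : p i = 0 := by
          rcases lt_or_eq_of_le ((hw01 _ _).1 : (0:ℝ) ≤ p i) with hlt | heq
          · exact absurd (Finset.mem_filter.mpr ⟨hi, hlt⟩) hni
          · exact heq.symm
        exact hF _ hz
      rw [h1, ← Fin.sum_univ_eq_sum_range (fun i => F (pair i)) n]
      have h2 : ∀ j : Fin n, F (pair j) = F (e.symm j) := by
        intro j; congr 1; simp [hpair, j.isLt]
      rw [Finset.sum_congr rfl fun j _ => h2 j]
      exact Equiv.sum_comp e.symm F
    refine Lift.convex I p (fun i _ => (hw01 _ _).1) ?_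
      (fun i => FDist.point (pair i).1) (fun i => FDist.point (pair i).2)
      ?_ Δ Θ ?_ ?_
    · have := key (fun x => w x.1 x.2) (fun x hx => hx)
      rw [show ∑ i ∈ I, p i = ∑ i ∈ I, (fun x : S × T => w x.1 x.2) (pair i) from rfl,
        this, Fintype.sum_prod_type]
      rw [Finset.sum_congr rfl fun s _ => hrow s]
      exact Δ.sum_one
    · intro i hi
      exact Lift.point (hR _ _ (Finset.mem_filter.mp hi).2)
    · funext u
      rw [Finset.sum_apply]
      have h2 : ∀ i ∈ I, (p i • ((fun i => FDist.point (pair i).1) i).f) u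
          = (fun x : S × T => w x.1 x.2 * (if u = x.1 then 1 else 0)) (pair i) := by
        intro i _
        simp [FDist.point, hpdef, Pi.smul_apply, smul_eq_mul]
      rw [Finset.sum_congr rfl h2,
        key (fun x : S × T => w x.1 x.2 * (if u = x.1 then 1 else 0))
          (fun x hx => by rw [hx, zero_mul]),
        Fintype.sum_prod_type]
      have hh : ∀ s, ∑ t, w s t * (if u = s then (1:ℝ) else 0)
          = if u = s then Δ.f s else 0 := by
        intro s; split <;> simp [hrow s]
      rw [Finset.sum_congr rfl fun s _ => hh s, Finset.sum_ite_eq]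
      simp
    · funext v
      rw [Finset.sum_apply]
      have h2 : ∀ i ∈ I, (p i • ((fun i => FDist.point (pair i).2) i).f) v
          = (fun x : S × T => w x.1 x.2 * (if v = x.2 then 1 else 0)) (pair i) := by
        intro i _
        simp [FDist.point, hpdef, Pi.smul_apply, smul_eq_mul]
      rw [Finset.sum_congr rfl h2,
        key (fun x : S × T => w x.1 x.2 * (if v = x.2 then 1 else 0))
          (fun x hx => by rw [hx, zero_mul]),
        Fintype.sum_prod_type]
      have hh : ∀ s, ∑ t, w s t * (if v = t then (1:ℝ) else 0) = w s v := by
        intro s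
        simp only [mul_ite, mul_one, mul_zero]
        rw [Finset.sum_ite_eq]; simp
      rw [Finset.sum_congr rfl fun s _ => hh s]
      exact (hcol v).symm
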